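/- If S is a subring of a commutative domain R such that R is integral over S, then the Krull dimension of R equals the Krull dimension of S. -/
import Mathlib

/-- If `S` is a subring of a commutative domain `R` such that `R` is integral
over `S`, then the Krull dimensions of `R` and `S` coincide. -/
theorem ringKrullDim_eq_of_isIntegral (R : Type) [CommRing R] [IsDomain R]
    (S : Subring R) (h : ∀ r : R, IsIntegral S r) :
    ringKrullDim R = ringKrullDim S := by
  have hint : Algebra.IsIntegral S R := ⟨h⟩
  have hker : RingHom.ker (algebraMap S R) = ⊥ := by
    rw [RingHom.ker_eq_bot_iff_eq_zero]
    intro x hx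
    exact Subtype.ext hx
  apply le_antisymm
  · -- dim R ≤ dim S via strict monotonicity (incomparability)
    refine Order.krullDim_le_of_strictMono
      (fun p : PrimeSpectrum R => PrimeSpectrum.comap (algebraMap S R) p) ?_
    intro p q hpq
    rw [← PrimeSpectrum.asIdeal_lt_asIdeal]
    obtain ⟨hle, x, hxq, hxp⟩ := SetLike.lt_iff_le_and_exists.mp
      ((PrimeSpectrum.asIdeal_lt_asIdeal p q).mpr hpq)
    exact Ideal.comap_lt_comap_of_integral_mem_sdiff hle ⟨hxq, hxp⟩ (h x)
  · -- dim S ≤ dim R via lying over / going up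
    have key : ∀ n : ℕ, ∀ p : LTSeries (PrimeSpectrum S), p.length = n →
        ∃ q : LTSeries (PrimeSpectrum R), q.length = n ∧
          q.last.asIdeal.comap (algebraMap S R) = p.last.asIdeal := by
      intro n
      induction n with
      | zero =>
        intro p hp
        obtain ⟨Q, _, hQprime, hQ⟩ :=
          Ideal.exists_ideal_over_prime_of_isIntegral p.last.asIdeal ⊥
            (by rw [show Ideal.comap (algebraMap S R) ⊥ = RingHom.ker (algebraMap S R) from rfl, hker]; exact bot_le)
        exact ⟨RelSeries.singleton _ ⟨Q, hQprime⟩, rfl, hQ⟩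
      | succ n ih =>
        intro p hp
        obtain ⟨q, hqlen, hqlast⟩ := ih p.eraseLast
          (by simp [RelSeries.eraseLast_length, hp])
        obtain ⟨Q, hQge, hQprime, hQ⟩ :=
          Ideal.exists_ideal_over_prime_of_isIntegral p.last.asIdeal q.last.asIdeal
            (by
              rw [hqlast]
              exact le_of_lt ((PrimeSpectrum.asIdeal_lt_asIdeal _ _).mpr
                (p.eraseLast_last_rel_last (by omega))))
        have hlt : q.last < (⟨Q, hQprime⟩ : PrimeSpectrum R) := by
          rw [← PrimeSpectrum.asIdeal_lt_asIdeal]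
          refine lt_of_le_of_ne hQge ?_
          intro heq
          have : p.eraseLast.last < p.last := p.eraseLast_last_rel_last (by omega)
          rw [← PrimeSpectrum.asIdeal_lt_asIdeal, ← hqlast, heq, hQ] at this
          exact lt_irrefl _ this
        exact ⟨q.snoc ⟨Q, hQprime⟩ hlt, by simp [hqlen], by simp [hQ]⟩
    rw [ringKrullDim, ringKrullDim, Order.krullDim, Order.krullDim]
    refine iSup_le fun p => ?_
    obtain ⟨q, hq, -⟩ := key p.length p rfl
    exact le_trans (by rw [hq]) (le_iSup _ q)
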